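/- Let α and β be countable types, and let wA : α → ℝ and wB : β → ℝ be nonnegative weight functions such that ZA := ∑'_{a} wA a and ZB := ∑'_{b} wB b satisfy 0 < ZA < ∞ and 0 < ZB < ∞. Let PA be the probability mass function a ↦ wA a / ZA on α and PB the probability mass function b ↦ wB b / ZB on β. Then the mixture probability mass function on α ⊕ β that with probability ZA/(ZA+ZB) returns Sum.inl of a sample from PA and with probability ZB/(ZA+ZB) returns Sum.inr of a sample from PB assigns mass wA a/(ZA+ZB) to inl a and mass wB b/(ZA+ZB) to inr b; in particular it is the Boltzmann distribution for the combined weight Sum.elim wA wB, whose total sum is ZA + ZB. -/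

import Mathlib

/-- Correctness of the Boltzmann sampling rule for the Sum construction:
the Bernoulli mixture with probability `ZA/(ZA+ZB)` of the Boltzmann
distributions for `wA` and `wB` is the Boltzmann distribution for the
combined weight `Sum.elim wA wB`, whose total sum is `ZA + ZB`. -/
theorem stmt_1 {α β : Type*} [Countable α] [Countable β]
    (wA : α → ℝ) (wB : β → ℝ)
    (hwA : ∀ a, 0 ≤ wA a) (hwB : ∀ b, 0 ≤ wB b)
    (hsA : Summable wA) (hsB : Summable wB)
    (hZA : 0 < ∑' a, wA a) (hZB : 0 < ∑' b, wB b) :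
    (∀ a : α,
      ((∑' a, wA a) / ((∑' a, wA a) + (∑' b, wB b))) * (wA a / (∑' a, wA a))
        = wA a / ((∑' a, wA a) + (∑' b, wB b))) ∧
    (∀ b : β,
      ((∑' b, wB b) / ((∑' a, wA a) + (∑' b, wB b))) * (wB b / (∑' b, wB b))
        = wB b / ((∑' a, wA a) + (∑' b, wB b))) ∧
    (∑' c : α ⊕ β, Sum.elim wA wB c = (∑' a, wA a) + (∑' b, wB b)) ∧
    (∀ c : α ⊕ β,
      Sum.elim
        (fun a => ((∑' a, wA a) / ((∑' a, wA a) + (∑' b, wB b))) * (wA a / (∑' a, wA a)))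
        (fun b => ((∑' b, wB b) / ((∑' a, wA a) + (∑' b, wB b))) * (wB b / (∑' b, wB b))) c
        = Sum.elim wA wB c / ((∑' a, wA a) + (∑' b, wB b))) := by
  have hA : (∑' a, wA a) ≠ 0 := ne_of_gt hZA
  have hB : (∑' b, wB b) ≠ 0 := ne_of_gt hZB
  have hAB : (∑' a, wA a) + (∑' b, wB b) ≠ 0 := ne_of_gt (add_pos hZA hZB)
  have h1 : ∀ a : α,
      ((∑' a, wA a) / ((∑' a, wA a) + (∑' b, wB b))) * (wA a / (∑' a, wA a))
        = wA a / ((∑' a, wA a) + (∑' b, wB b)) := by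
    intro a; field_simp
  have h2 : ∀ b : β,
      ((∑' b, wB b) / ((∑' a, wA a) + (∑' b, wB b))) * (wB b / (∑' b, wB b))
        = wB b / ((∑' a, wA a) + (∑' b, wB b)) := by
    intro b; field_simp
  refine ⟨h1, h2, ?_, ?_⟩
  · have hL : HasSum ((Sum.elim wA wB ∘ (↑) : Set.range (Sum.inl : α → α ⊕ β) → ℝ)) (∑' a, wA a) := by
      have := (Equiv.ofInjective (Sum.inl : α → α ⊕ β) Sum.inl_injective).hasSum_iff
        (f := (Sum.elim wA wB ∘ (↑) : Set.range (Sum.inl : α → α ⊕ β) → ℝ)) (a := ∑' a, wA a)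
      exact this.mp (by convert hsA.hasSum using 1; rfl)
    have hR : HasSum ((Sum.elim wA wB ∘ (↑) : Set.range (Sum.inr : β → α ⊕ β) → ℝ)) (∑' b, wB b) := by
      have := (Equiv.ofInjective (Sum.inr : β → α ⊕ β) Sum.inr_injective).hasSum_iff
        (f := (Sum.elim wA wB ∘ (↑) : Set.range (Sum.inr : β → α ⊕ β) → ℝ)) (a := ∑' b, wB b)
      exact this.mp (by convert hsB.hasSum using 1; rfl)
    exact (hL.add_isCompl Set.isCompl_range_inl_range_inr hR).tsum_eq
  · rintro (a | b)
    · exact h1 a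
    · exact h2 b
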